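/- Fix a β-sequence [·]_β, and let P_n(x) = ∏_{k=0}^{n−1} (x − [k]_β) for n ≥ 0 (so P_0 = 1); this is an admissible sequence since [0]_β = 0. Let A be its lowering operator, the ℂ-linear operator on ℂ[x] with A P_0 = 0 and A P_n = [n]_β P_{n−1} for n ≥ 1. If A commutes with D_β on ℂ[x] (A ∘ D_β = D_β ∘ A), then either [n]_β = n for all n ≥ 0, or [n]_β = 1 for all n ≥ 1. -/

import Mathlib

open Polynomial Finset


-- degree/monicity facts for P
lemma aux_monic (β : ℕ → ℝ) (P : ℕ → Polynomial ℂ)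
    (hP : ∀ n : ℕ, P n = ∏ k ∈ Finset.range n, (X - C ((β k : ℂ)))) (n : ℕ) :
    (P n).Monic := by
  rw [hP]; exact monic_prod_of_monic _ _ (fun k _ => monic_X_sub_C _)

lemma aux_natDegree (β : ℕ → ℝ) (P : ℕ → Polynomial ℂ)
    (hP : ∀ n : ℕ, P n = ∏ k ∈ Finset.range n, (X - C ((β k : ℂ)))) (n : ℕ) :
    (P n).natDegree = n := by
  rw [hP, natDegree_prod_of_monic _ _ (fun k _ => monic_X_sub_C _)]
  simp [natDegree_X_sub_C]

lemma aux_coeff_top (β : ℕ → ℝ) (P : ℕ → Polynomial ℂ)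
    (hP : ∀ n : ℕ, P n = ∏ k ∈ Finset.range n, (X - C ((β k : ℂ)))) (n : ℕ) :
    (P n).coeff n = 1 := by
  have h := (aux_monic β P hP n)
  have h2 := aux_natDegree β P hP n
  have h3 := h.coeff_natDegree
  rw [h2] at h3; exact h3

lemma aux_coeff_hi (β : ℕ → ℝ) (P : ℕ → Polynomial ℂ)
    (hP : ∀ n : ℕ, P n = ∏ k ∈ Finset.range n, (X - C ((β k : ℂ)))) (n j : ℕ) (h : n < j) :
    (P n).coeff j = 0 := by
  apply coeff_eq_zero_of_natDegree_lt
  rw [aux_natDegree β P hP n]; exact h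

lemma aux_coeff_sub (β : ℕ → ℝ) (P : ℕ → Polynomial ℂ)
    (hP : ∀ n : ℕ, P n = ∏ k ∈ Finset.range n, (X - C ((β k : ℂ)))) (n : ℕ) :
    (P (n+1)).coeff n = -(∑ k ∈ Finset.range (n+1), (β k : ℂ)) := by
  induction n with
  | zero => simp [hP]
  | succ m ih =>
      have hstep : P (m+2) = P (m+1) * (X - C ((β (m+1) : ℂ))) := by
        rw [hP, hP, Finset.prod_range_succ]
      rw [hstep, coeff_mul_X_sub_C, ih, aux_coeff_top β P hP (m+1)]
      conv_rhs => rw [Finset.sum_range_succ]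
      ring

lemma aux_Dcoeff (β : ℕ → ℝ) (hβ0 : β 0 = 0) (D : Module.End ℂ (Polynomial ℂ))
    (hD : ∀ n : ℕ, D (X ^ n) = ((β n : ℂ)) • X ^ (n - 1)) (p : Polynomial ℂ) (j : ℕ) :
    (D p).coeff j = (β (j+1) : ℂ) * p.coeff (j+1) := by
  induction p using Polynomial.induction_on' with
  | add p q hp hq => rw [map_add, coeff_add, hp, hq, coeff_add]; ring
  | monomial n a =>
      have hm : (monomial n a : Polynomial ℂ) = a • X ^ n := by
        rw [smul_eq_C_mul, C_mul_X_pow_eq_monomial]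
      rw [hm, map_smul, coeff_smul, hD n, coeff_smul, coeff_smul, coeff_X_pow, coeff_X_pow]
      rcases n with _ | m
      · simp [hβ0]
      · simp only [Nat.add_sub_cancel, smul_eq_mul]
        by_cases h : j = m
        · subst h; simp [mul_comm]
        · have h2 : ¬ (m + 1 = j + 1) := by omega
          simp [h, h2]

lemma aux_Alow (β : ℕ → ℝ) (hβ0 : β 0 = 0) (P : ℕ → Polynomial ℂ)
    (hP : ∀ n : ℕ, P n = ∏ k ∈ Finset.range n, (X - C ((β k : ℂ))))
    (A : Module.End ℂ (Polynomial ℂ))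
    (hA : ∀ n : ℕ, A (P n) = ((β n : ℂ)) • P (n - 1)) :
    ∀ (d : ℕ) (p : Polynomial ℂ), (∀ m, d < m → p.coeff m = 0) →
      ∀ m, d ≤ m → (A p).coeff m = 0 := by
  intro d
  induction d with
  | zero =>
      intro p hp m _
      have hdeg : p.natDegree ≤ 0 := natDegree_le_iff_coeff_eq_zero.mpr hp
      have hpc : p = C (p.coeff 0) := eq_C_of_natDegree_le_zero hdeg
      have hP0 : (P 0) = 1 := by rw [hP]; simp
      have : p = (p.coeff 0) • P 0 := by rw [hP0, smul_eq_C_mul, mul_one]; exact hpc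
      rw [this, map_smul, hA 0, hβ0]
      simp
  | succ d ih =>
      intro p hp m hm
      set q := p - (p.coeff (d+1)) • P (d+1) with hq
      have hqc : ∀ k, d < k → q.coeff k = 0 := by
        intro k hk
        rw [hq, coeff_sub, coeff_smul]
        rcases eq_or_lt_of_le (Nat.succ_le_of_lt hk) with h | h
        · rw [← h, aux_coeff_top β P hP (d+1)]; simp
        · rw [hp k h, aux_coeff_hi β P hP (d+1) k h]; simp
      have hpq : p = q + (p.coeff (d+1)) • P (d+1) := by rw [hq]; ring
      rw [hpq, map_add, map_smul, hA (d+1), coeff_add, coeff_smul, coeff_smul]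
      have h1 : (A q).coeff m = 0 := ih q hqc m (le_trans (Nat.le_succ d) hm)
      have h2 : (P (d+1-1)).coeff m = 0 := by
        apply aux_coeff_hi β P hP
        omega
      rw [h1, h2]; simp

lemma aux_star (β : ℕ → ℝ) (hβ0 : β 0 = 0) (P : ℕ → Polynomial ℂ)
    (hP : ∀ n : ℕ, P n = ∏ k ∈ Finset.range n, (X - C ((β k : ℂ))))
    (D A : Module.End ℂ (Polynomial ℂ))
    (hD : ∀ n : ℕ, D (X ^ n) = ((β n : ℂ)) • X ^ (n - 1))
    (hA : ∀ n : ℕ, A (P n) = ((β n : ℂ)) • P (n - 1))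
    (hcomm : A * D = D * A) (m : ℕ) :
    (β (m+3) : ℂ) * (2 * (β (m+1) : ℂ) * (∑ k ∈ Finset.range (m+2), (β k : ℂ))
        - (β (m+2) : ℂ) * (∑ k ∈ Finset.range (m+1), (β k : ℂ)))
      = (β (m+2) : ℂ) * (β (m+1) : ℂ) * (∑ k ∈ Finset.range (m+3), (β k : ℂ)) := by
  set S : ℕ → ℂ := fun j => ∑ k ∈ Finset.range j, (β k : ℂ) with hS
  set c : ℂ := (β (m+3) : ℂ) * S (m+2) - (β (m+2) : ℂ) * S (m+3) with hc
  set R : Polynomial ℂ := D (P (m+3)) - (β (m+3) : ℂ) • P (m+2) - c • P (m+1) with hR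
  have hDc := aux_Dcoeff β hβ0 D hD
  have hRc : ∀ j, m < j → R.coeff j = 0 := by
    intro j hj
    rw [hR, coeff_sub, coeff_sub, coeff_smul, coeff_smul, hDc]
    have hj3 : j = m+1 ∨ j = m+2 ∨ m+3 ≤ j := by omega
    rcases hj3 with rfl | rfl | h
    · rw [show m+1+1 = m+2 from rfl, aux_coeff_sub β P hP (m+2),
        aux_coeff_sub β P hP (m+1), aux_coeff_top β P hP (m+1)]
      rw [hc]; simp only [smul_eq_mul]; ring
    · rw [show m+2+1 = m+3 from rfl, aux_coeff_top β P hP (m+3),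
        aux_coeff_top β P hP (m+2), aux_coeff_hi β P hP (m+1) (m+2) (by omega)]
      simp
    · rw [aux_coeff_hi β P hP (m+3) (j+1) (by omega),
        aux_coeff_hi β P hP (m+2) j (by omega),
        aux_coeff_hi β P hP (m+1) j (by omega)]
      simp
  have hAR : (A R).coeff m = 0 :=
    aux_Alow β hβ0 P hP A hA m R hRc m le_rfl
  -- decompose D (P (m+3))
  have hdec : D (P (m+3)) = (β (m+3) : ℂ) • P (m+2) + c • P (m+1) + R := by
    rw [hR]; ring
  -- LHS coefficient
  have hADP : (A (D (P (m+3)))).coeff m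
      = (β (m+3) : ℂ) * ((β (m+2) : ℂ) * (-(S (m+1))))
        + c * ((β (m+1) : ℂ) * 1) := by
    rw [hdec, map_add, map_add, map_smul, map_smul, hA (m+2), hA (m+1)]
    rw [coeff_add, coeff_add, coeff_smul, coeff_smul, coeff_smul, coeff_smul, hAR]
    rw [show m+2-1 = m+1 from rfl, show m+1-1 = m from rfl]
    rw [show (P (m+1)).coeff m = -(S (m+1)) from aux_coeff_sub β P hP m,
      aux_coeff_top β P hP m]
    simp [smul_eq_mul]
  -- RHS coefficient
  have hDAP : (D (A (P (m+3)))).coeff m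
      = (β (m+3) : ℂ) * ((β (m+1) : ℂ) * (-(S (m+2)))) := by
    rw [hA (m+3), show m+3-1 = m+2 from rfl, map_smul, coeff_smul, hDc,
      show (P (m+2)).coeff (m+1) = -(S (m+2)) from aux_coeff_sub β P hP (m+1)]
    simp [smul_eq_mul]
  have heq : A (D (P (m+3))) = D (A (P (m+3))) := by
    have h := LinearMap.congr_fun hcomm (P (m+3))
    simpa [Module.End.mul_apply] using h
  have hfin : (β (m+3) : ℂ) * ((β (m+2) : ℂ) * (-(S (m+1)))) + c * ((β (m+1) : ℂ) * 1)
      = (β (m+3) : ℂ) * ((β (m+1) : ℂ) * (-(S (m+2)))) := by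
    rw [← hADP, ← hDAP, heq]
  have hS3 : S (m+3) = ∑ k ∈ Finset.range (m+3), (β k : ℂ) := rfl
  have hS2 : S (m+2) = ∑ k ∈ Finset.range (m+2), (β k : ℂ) := rfl
  have hS1 : S (m+1) = ∑ k ∈ Finset.range (m+1), (β k : ℂ) := rfl
  rw [← hS1, ← hS2, ← hS3]
  rw [hc] at hfin
  linear_combination hfin

lemma aux_eqII (β : ℕ → ℝ) (hβ0 : β 0 = 0) (hβ1 : β 1 = 1) (P : ℕ → Polynomial ℂ)
    (hP : ∀ n : ℕ, P n = ∏ k ∈ Finset.range n, (X - C ((β k : ℂ))))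
    (D A : Module.End ℂ (Polynomial ℂ))
    (hD : ∀ n : ℕ, D (X ^ n) = ((β n : ℂ)) • X ^ (n - 1))
    (hA : ∀ n : ℕ, A (P n) = ((β n : ℂ)) • P (n - 1))
    (hcomm : A * D = D * A) :
    β 2 * (β 2 + β 3 + β 2 * β 3) + β 4 - β 3 * (1 + β 2 + β 3) = β 2 * β 4 := by
  set b2 : ℂ := (β 2 : ℂ) with hb2
  set b3 : ℂ := (β 3 : ℂ) with hb3
  set b4 : ℂ := (β 4 : ℂ) with hb4
  have hc0 : ((β 0 : ℝ) : ℂ) = 0 := by rw [hβ0]; norm_num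
  have hc1 : ((β 1 : ℝ) : ℂ) = 1 := by rw [hβ1]; norm_num
  have hP0 : P 0 = 1 := by rw [hP]; simp
  have hP1 : P 1 = X := by
    rw [hP, Finset.prod_range_one, hc0]; simp
  have hP2 : P 2 = X^2 - X := by
    rw [hP, Finset.prod_range_succ, Finset.prod_range_one, hc0, hc1]
    simp only [map_zero, map_one]; ring
  have hP3 : P 3 = X^3 - C (1+b2) * X^2 + C b2 * X := by
    rw [hP, Finset.prod_range_succ, Finset.prod_range_succ, Finset.prod_range_one,
      hc0, hc1, ← hb2]
    simp only [map_add, map_one, map_zero]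
    ring
  have hP4 : P 4 = X^4 - C (1+b2+b3) * X^3 + C (b2+b3+b2*b3) * X^2 - C (b2*b3) * X := by
    rw [hP, Finset.prod_range_succ, Finset.prod_range_succ, Finset.prod_range_succ,
      Finset.prod_range_one, hc0, hc1, ← hb2, ← hb3]
    simp only [map_add, map_one, map_mul, map_zero]
    ring
  have hDP4 : D (P 4) = C b4 * X^3 - C ((1+b2+b3)*b3) * X^2
      + C ((b2+b3+b2*b3)*b2) * X - C (b2*b3) := by
    have hcomb : P 4 = (1:ℂ) • X^4 + (-(1+b2+b3)) • X^3 + (b2+b3+b2*b3) • X^2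
        + (-(b2*b3)) • X^1 := by
      rw [hP4]; simp only [smul_eq_C_mul, map_add, map_neg, map_mul, map_one]; ring
    rw [hcomb, map_add, map_add, map_add, map_smul, map_smul, map_smul, map_smul,
      hD 4, hD 3, hD 2, hD 1]
    norm_num [smul_eq_C_mul, ← hb2, ← hb3, ← hb4, hc1, map_add, map_neg, map_mul, map_one]
    ring
  set α2 : ℂ := b4*(1+b2) - b3*(1+b2+b3) with hα2
  set α1 : ℂ := b2*(b2+b3+b2*b3) + b4 - b3*(1+b2+b3) with hα1
  have hexp : D (P 4) = b4 • P 3 + α2 • P 2 + α1 • P 1 + (-(b2*b3)) • P 0 := by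
    rw [hDP4, hP3, hP2, hP1, hP0, hα2, hα1]
    simp only [smul_eq_C_mul, map_add, map_neg, map_mul, map_one, map_sub]
    ring
  -- coefficient 0 of A (D (P 4))
  have hADP : (A (D (P 4))).coeff 0 = α1 := by
    rw [hexp, map_add, map_add, map_add, map_smul, map_smul, map_smul, map_smul,
      hA 3, hA 2, hA 1, hA 0, hc0, ← hb2, ← hb3, hc1]
    simp only [coeff_add, coeff_smul, hP2, hP1, hP0, zero_smul, smul_zero, one_smul]
    simp [smul_eq_mul]
  -- coefficient 0 of D (A (P 4))
  have hDAP : (D (A (P 4))).coeff 0 = b4 * b2 := by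
    rw [hA 4, show (4:ℕ)-1 = 3 from rfl, ← hb4, map_smul, coeff_smul,
      aux_Dcoeff β hβ0 D hD, hc1]
    have : (P 3).coeff 1 = b2 := by
      rw [hP3]
      simp only [coeff_add, coeff_sub, coeff_C_mul, coeff_X_pow, coeff_X]
      norm_num
    rw [this]; simp [smul_eq_mul]
  have heq : A (D (P 4)) = D (A (P 4)) := by
    have h := LinearMap.congr_fun hcomm (P 4)
    simpa [Module.End.mul_apply] using h
  have hfinC : α1 = b4 * b2 := by rw [← hADP, ← hDAP, heq]
  rw [hα1, hb2, hb3, hb4] at hfinC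
  have hr : β 2 * (β 2 + β 3 + β 2 * β 3) + β 4 - β 3 * (1 + β 2 + β 3) = β 4 * β 2 := by
    exact_mod_cast hfinC
  linear_combination hr



/-- the β-falling-factorial sequence `P_n(x) = ∏_{k=0}^{n-1}(x − [k]_β)` is a
β-binomial sequence (i.e. its lowering operator commutes with `D_β`) only in the classical
case `[n]_β = n` and in the free case `[n]_β = 1` for `n ≥ 1`. -/
theorem stmt_18 (β : ℕ → ℝ) (hβ0 : β 0 = 0) (hβ1 : β 1 = 1) (hβpos : ∀ n, 1 ≤ n → 0 < β n)
    (P : ℕ → Polynomial ℂ)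
    (hP : ∀ n : ℕ, P n = ∏ k ∈ Finset.range n, (Polynomial.X - Polynomial.C ((β k : ℂ))))
    (D A : Module.End ℂ (Polynomial ℂ))
    (hD : ∀ n : ℕ, D (Polynomial.X ^ n) = ((β n : ℂ)) • Polynomial.X ^ (n - 1))
    (hA : ∀ n : ℕ, A (P n) = ((β n : ℂ)) • P (n - 1))
    (hcomm : A * D = D * A) :
    (∀ n : ℕ, β n = n) ∨ (∀ n : ℕ, 1 ≤ n → β n = 1) := by

  have starR : ∀ m : ℕ, β (m+3) * (2 * β (m+1) * (∑ k ∈ Finset.range (m+2), β k)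
        - β (m+2) * (∑ k ∈ Finset.range (m+1), β k))
      = β (m+2) * β (m+1) * (∑ k ∈ Finset.range (m+3), β k) := by
    intro m
    exact_mod_cast aux_star β hβ0 P hP D A hD hA hcomm m
  have h2pos := hβpos 2 (by norm_num)
  have h3pos := hβpos 3 (by norm_num)
  -- small-degree equations
  have h3 : 2 * β 3 = β 2 * (1 + β 2) := by
    have h := starR 0
    simp only [Finset.sum_range_succ, Finset.sum_range_zero, hβ0, hβ1] at h
    linarith [h]
  have h4 : β 4 * (2 * β 2 * (1 + β 2) - β 3) = β 3 * β 2 * (1 + β 2 + β 3) := by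
    have h := starR 1
    simp only [Finset.sum_range_succ, Finset.sum_range_zero, hβ0, hβ1] at h
    linear_combination h
  have hII := aux_eqII β hβ0 hβ1 P hP D A hD hA hcomm
  have h4' : β 3 * (3 * β 4) = β 3 * (β 2 * (1 + β 2 + β 3)) := by
    linear_combination h4 + 2 * β 4 * h3
  have e4 : 3 * β 4 = β 2 * (1 + β 2 + β 3) := mul_left_cancel₀ (ne_of_gt h3pos) h4'
  have key : β 2 * (β 2 - 1)^2 * (β 2 - 2) = 0 := by
    linear_combination 12 * hII - 4 * (1 - β 2) * e4 - (β 2^2 - β 2 - 6 * β 3 - 6) * h3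
  have h12 : β 2 = 1 ∨ β 2 = 2 := by
    rcases mul_eq_zero.mp key with h | h
    · rcases mul_eq_zero.mp h with h' | h'
      · exact absurd h' (ne_of_gt h2pos)
      · left; have := sq_eq_zero_iff.mp h'; linarith
    · right; linarith
  rcases h12 with hc | hc
  · -- free case : β n = 1 for n ≥ 1
    right
    have Q : ∀ n : ℕ, ∀ k < n, 1 ≤ k → β k = 1 := by
      intro n
      induction n with
      | zero => intro k hk; omega
      | succ N IH =>
          intro k hk h1k
          rcases Nat.lt_or_ge k N with h | h
          · exact IH k h h1k
          · have hkN : k = N := by omega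
            subst hkN
            rcases k with _ | _ | _ | m
            · omega
            · exact hβ1
            · exact hc
            · -- k = m+3
              have IH' : ∀ j, 1 ≤ j → j ≤ m+2 → β j = 1 := by
                intro j h1 h2; exact IH j (by omega) h1
              have hsum : ∀ j, j ≤ m+2 → (∑ k ∈ Finset.range (j+1), β k) = (j : ℝ) := by
                intro j hj
                induction j with
                | zero => simp [hβ0]
                | succ i IHs =>
                    rw [Finset.sum_range_succ, IHs (by omega), IH' (i+1) (by omega) (by omega)]
                    push_cast; ring
              have s1 : (∑ k ∈ Finset.range (m+1), β k) = (m : ℝ) := hsum m (by omega)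
              have s2 : (∑ k ∈ Finset.range (m+2), β k) = ((m+1 : ℕ) : ℝ) := hsum (m+1) (by omega)
              have s3 : (∑ k ∈ Finset.range (m+3), β k) = ((m+2 : ℕ) : ℝ) := hsum (m+2) (by omega)
              have b1' : β (m+1) = 1 := IH' (m+1) (by omega) (by omega)
              have b2' : β (m+2) = 1 := IH' (m+2) (by omega) (by omega)
              have h := starR m
              rw [s1, s2, s3, b1', b2'] at h
              push_cast at h
              have hne : ((m:ℝ)+2) ≠ 0 := by positivity
              have hfin : β (m+3) * ((m:ℝ)+2) = 1 * ((m:ℝ)+2) := by linear_combination h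
              exact mul_right_cancel₀ hne hfin
    intro n hn
    exact Q (n+1) n (Nat.lt_succ_self n) hn
  · -- classical case : β n = n
    left
    have Q : ∀ n : ℕ, ∀ k < n, β k = k := by
      intro n
      induction n with
      | zero => intro k hk; omega
      | succ N IH =>
          intro k hk
          rcases Nat.lt_or_ge k N with h | h
          · exact IH k h
          · have hkN : k = N := by omega
            subst hkN
            rcases k with _ | _ | _ | m
            · simpa using hβ0
            · simpa using hβ1
            · rw [hc]; norm_num
            · -- k = m+3
              have IH' : ∀ j, j ≤ m+2 → β j = (j : ℝ) := by
                intro j h2; exact IH j (by omega)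
              have hsum : ∀ j, j ≤ m+2 →
                  (∑ k ∈ Finset.range (j+1), β k) = (j : ℝ) * ((j : ℝ)+1) / 2 := by
                intro j hj
                induction j with
                | zero => simp [hβ0]
                | succ i IHs =>
                    rw [Finset.sum_range_succ, IHs (by omega), IH' (i+1) (by omega)]
                    push_cast; ring
              have s1 : (∑ k ∈ Finset.range (m+1), β k) = (m : ℝ) * ((m:ℝ)+1) / 2 :=
                hsum m (by omega)
              have s2 : (∑ k ∈ Finset.range (m+2), β k)
                  = ((m:ℝ)+1) * ((m:ℝ)+2) / 2 := by
                have := hsum (m+1) (by omega); push_cast at this ⊢; linarith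
              have s3 : (∑ k ∈ Finset.range (m+3), β k)
                  = ((m:ℝ)+2) * ((m:ℝ)+3) / 2 := by
                have := hsum (m+2) (by omega); push_cast at this ⊢; linarith
              have b1' : β (m+1) = (m:ℝ)+1 := by
                have := IH' (m+1) (by omega); push_cast at this ⊢; linarith
              have b2' : β (m+2) = (m:ℝ)+2 := by
                have := IH' (m+2) (by omega); push_cast at this ⊢; linarith
              have h := starR m
              rw [s1, s2, s3, b1', b2'] at h
              have hne : ((m:ℝ)+1) * ((m:ℝ)+2)^2 / 2 ≠ 0 := by positivity
              have hfin : β (m+3) * (((m:ℝ)+1) * ((m:ℝ)+2)^2 / 2)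
                  = ((m:ℝ)+3) * (((m:ℝ)+1) * ((m:ℝ)+2)^2 / 2) := by linear_combination h
              have := mul_right_cancel₀ hne hfin
              push_cast
              linarith
    intro n
    exact Q (n+1) n (Nat.lt_succ_self n)
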